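/- For all integers n ≥ 1 and 1 ≤ i ≤ n, a_{n,i} = s_o(n,i) − s_e(n,i), where s_o(n,i) (respectively s_e(n,i)) is the total number of occurrences of the part i counted over all partitions of n into an odd (respectively even) number of distinct parts. -/

import Mathlib

/-!
STATEMENT 7: For all `n ≥ 1` and `1 ≤ i ≤ n`, `a_{n,i} = s_o(n,i) - s_e(n,i)`, where
`s_o(n,i)` (resp. `s_e(n,i)`) is the number of occurrences of the part `i` over all
partitions of `n` into an odd (resp. even) number of distinct parts.  A partition of `n`
into distinct parts is a finite set of distinct positive integers summing to `n`
(necessarily a subset of `{1, …, n}`); since parts are distinct, the total number of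
occurrences of `i` is the number of such partitions containing `i`.
-/

/-- `c(m) = (-1)^k` when `m = k(3k+1)/2` or `m = k(3k-1)/2` for some integer `k ≥ 0`,
and `c(m) = 0` otherwise. -/
def pentCoeff (m : ℤ) : ℤ :=
  ∑ k ∈ Finset.range (m.toNat + 1),
    ((if 2 * m = (k : ℤ) * (3 * k + 1) then (-1 : ℤ) ^ k else 0) +
      (if 2 * m = (k : ℤ) * (3 * k - 1) ∧ 1 ≤ k then (-1 : ℤ) ^ k else 0))

/-- `a_{n,i} := ∑_{s=0}^{⌊n/i⌋ - 1} c(n - (s+1) i)`. -/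
def aEnt (n i : ℕ) : ℤ :=
  ∑ s ∈ Finset.range (n / i), pentCoeff ((n : ℤ) - (s + 1) * i)

/-- The number of occurrences of `i` as a part over all partitions of `n` into an odd
number of distinct parts. -/
def sOdd (n i : ℕ) : ℕ :=
  ((Finset.Icc 1 n).powerset.filter
    (fun S => S.sum id = n ∧ i ∈ S ∧ Odd S.card)).card

/-- The number of occurrences of `i` as a part over all partitions of `n` into an even
number of distinct parts. -/
def sEven (n i : ℕ) : ℕ :=
  ((Finset.Icc 1 n).powerset.filter
    (fun S => S.sum id = n ∧ i ∈ S ∧ Even S.card)).card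

open Finset

namespace Pent7

def mn (S : Finset ℕ) : ℕ := if h : S.Nonempty then S.min' h else 0
def mx (S : Finset ℕ) : ℕ := if h : S.Nonempty then S.max' h else 0

def stair (S : Finset ℕ) : ℕ :=
  Nat.findGreatest (fun t => Finset.Icc (mx S + 1 - t) (mx S) ⊆ S) (mx S)

def IsGood (S : Finset ℕ) : Prop :=
  (mn S ≤ stair S ∧ 2 * mn S ≤ mx S) ∨ (stair S < mn S ∧ 2 * stair S < mx S)

def phi (S : Finset ℕ) : Finset ℕ :=
  if mn S ≤ stair S then
    (S \ ({mn S} ∪ Finset.Icc (mx S - mn S + 1) (mx S))) ∪ Finset.Icc (mx S - mn S + 2) (mx S + 1)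
  else
    (S \ Finset.Icc (mx S - stair S + 1) (mx S)) ∪ ({stair S} ∪ Finset.Icc (mx S - stair S) (mx S - 1))

section basic
variable {S : Finset ℕ}

lemma mn_mem (hne : S.Nonempty) : mn S ∈ S := by rw [mn, dif_pos hne]; exact S.min'_mem hne
lemma mx_mem (hne : S.Nonempty) : mx S ∈ S := by rw [mx, dif_pos hne]; exact S.max'_mem hne
lemma mn_le {x : ℕ} (hx : x ∈ S) : mn S ≤ x := by
  rw [mn, dif_pos ⟨x, hx⟩]; exact S.min'_le x hx
lemma le_mx {x : ℕ} (hx : x ∈ S) : x ≤ mx S := by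
  rw [mx, dif_pos ⟨x, hx⟩]; exact S.le_max' x hx
lemma mn_eq {b : ℕ} (hb : b ∈ S) (h : ∀ x ∈ S, b ≤ x) : mn S = b :=
  le_antisymm (mn_le hb) (h _ (mn_mem ⟨b, hb⟩))
lemma mx_eq {b : ℕ} (hb : b ∈ S) (h : ∀ x ∈ S, x ≤ b) : mx S = b :=
  le_antisymm (h _ (mx_mem ⟨b, hb⟩)) (le_mx hb)

lemma stair_le : stair S ≤ mx S := Nat.findGreatest_le _

lemma stair_subset : Finset.Icc (mx S + 1 - stair S) (mx S) ⊆ S := by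
  refine Nat.findGreatest_spec (P := fun t => Finset.Icc (mx S + 1 - t) (mx S) ⊆ S)
    (m := 0) (Nat.zero_le _) ?_
  intro x hx
  simp only [Finset.mem_Icc] at hx
  omega

lemma stair_is_greatest {k : ℕ} (h1 : stair S < k) (h2 : k ≤ mx S) :
    ¬ Finset.Icc (mx S + 1 - k) (mx S) ⊆ S :=
  Nat.findGreatest_is_greatest (P := fun t => Finset.Icc (mx S + 1 - t) (mx S) ⊆ S) h1 h2

lemma le_stair {t : ℕ} (ht : t ≤ mx S) (h : Finset.Icc (mx S + 1 - t) (mx S) ⊆ S) :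
    t ≤ stair S := Nat.le_findGreatest ht h

lemma one_le_stair (hne : S.Nonempty) (h1 : 1 ≤ mx S) : 1 ≤ stair S := by
  refine le_stair h1 ?_
  intro x hx
  simp only [Finset.mem_Icc] at hx
  have : x = mx S := by omega
  subst this; exact mx_mem hne

lemma stair_le_of {t : ℕ} (h : mx S - t ∉ S) : stair S ≤ t := by
  by_contra h'
  push_neg at h'
  have h2 := stair_subset (S := S)
  have h3 : stair S ≤ mx S := stair_le
  exact h (h2 (by simp only [Finset.mem_Icc]; omega))

lemma mx_sub_stair_not_mem (hpos : ∀ x ∈ S, 1 ≤ x) : mx S - stair S ∉ S := by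
  intro hmem
  have h3 : stair S ≤ mx S := stair_le
  by_cases h : stair S = mx S
  · have := hpos _ hmem; omega
  · have := stair_is_greatest (S := S) (k := stair S + 1) (by omega) (by omega)
    refine this ?_
    intro x hx
    simp only [Finset.mem_Icc] at hx
    rcases Nat.eq_or_lt_of_le hx.1 with h4 | h4
    · have : x = mx S - stair S := by omega
      subst this; exact hmem
    · exact stair_subset (by simp only [Finset.mem_Icc]; omega)

lemma subset_Icc_one {n : ℕ} (hpos : ∀ x ∈ S, 1 ≤ x) (hsum : S.sum id = n) :
    S ⊆ Finset.Icc 1 n := by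
  intro x hx
  simp only [Finset.mem_Icc]
  refine ⟨hpos x hx, ?_⟩
  calc x = id x := rfl
    _ ≤ S.sum id := Finset.single_le_sum (fun y _ => Nat.zero_le (id y)) hx
    _ = n := hsum

end basic

lemma sum_Icc_shift (b c : ℕ) :
    ∑ x ∈ Finset.Icc (b + 1) (c + 1), x = (∑ x ∈ Finset.Icc b c, x) + (c + 1 - b) := by
  have h : Finset.Icc (b + 1) (c + 1) = (Finset.Icc b c).image (· + 1) := by
    rw [Finset.image_add_right_Icc]
  rw [h, Finset.sum_image (by intro x _ y _ h; simp only at h; omega), Finset.sum_add_distrib,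
    Finset.sum_const, Nat.card_Icc, smul_eq_mul, mul_one]


lemma caseA (S : Finset ℕ) (hne : S.Nonempty) (hpos : ∀ x ∈ S, 1 ≤ x)
    (h1 : mn S ≤ stair S) (h2 : 2 * mn S ≤ mx S) :
    (phi S).sum id = S.sum id ∧ (phi S).card + 1 = S.card ∧ (∀ x ∈ phi S, 1 ≤ x) ∧
      IsGood (phi S) ∧ phi (phi S) = S := by
  set a := mn S with ha_def
  set M := mx S with hM_def
  set t := stair S with ht_def
  have ha : a ∈ S := mn_mem hne
  have hM : M ∈ S := mx_mem hne
  have h1a : 1 ≤ a := hpos _ ha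
  have haM : a ≤ M := le_mx ha
  have htM : t ≤ M := stair_le
  set X : Finset ℕ := {a} ∪ Finset.Icc (M - a + 1) M with hX_def
  set R : Finset ℕ := S \ X with hR_def
  set NT : Finset ℕ := Finset.Icc (M - a + 2) (M + 1) with hNT_def
  have htop : Finset.Icc (M - a + 1) M ⊆ S := by
    refine Finset.Subset.trans (Finset.Icc_subset_Icc (by omega) le_rfl) stair_subset
  have hXsub : X ⊆ S := Finset.union_subset (by simpa using ha) htop
  have hphiS : phi S = R ∪ NT := by
    rw [phi, if_pos h1]
  have hRb : ∀ x ∈ R, a + 1 ≤ x ∧ x ≤ M - a := by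
    intro x hx
    rw [hR_def, Finset.mem_sdiff, hX_def, Finset.mem_union, Finset.mem_singleton,
      Finset.mem_Icc] at hx
    have h3 := mn_le hx.1
    have h4 := le_mx hx.1
    rw [← ha_def] at h3
    rw [← hM_def] at h4
    omega
  have hdisjRX : Disjoint R X := Finset.sdiff_disjoint
  have hdisjRNT : Disjoint R NT := by
    rw [Finset.disjoint_left]
    intro x hx hx'
    have := hRb x hx
    rw [hNT_def, Finset.mem_Icc] at hx'
    omega
  have hdisjaT : Disjoint ({a} : Finset ℕ) (Finset.Icc (M - a + 1) M) := by
    rw [Finset.disjoint_left]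
    intro x hx hx'
    rw [Finset.mem_singleton] at hx
    rw [Finset.mem_Icc] at hx'
    omega
  have hSdec : R ∪ X = S := Finset.sdiff_union_of_subset hXsub
  have hcardX : X.card = 1 + a := by
    rw [hX_def, Finset.card_union_of_disjoint hdisjaT, Finset.card_singleton, Nat.card_Icc]
    omega
  have hcardNT : NT.card = a := by
    rw [hNT_def, Nat.card_Icc]; omega
  have hsumNT : NT.sum id = (Finset.Icc (M - a + 1) M).sum id + a := by
    have h5 : NT = Finset.Icc ((M - a + 1) + 1) (M + 1) := by
      rw [hNT_def]
    have := sum_Icc_shift (M - a + 1) M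
    simp only [id]
    rw [h5]
    rw [this]
    omega
  -- card
  have hcard : (phi S).card + 1 = S.card := by
    rw [hphiS, Finset.card_union_of_disjoint hdisjRNT, hcardNT, ← hSdec,
      Finset.card_union_of_disjoint hdisjRX, hcardX]
    omega
  -- sum
  have hsum : (phi S).sum id = S.sum id := by
    rw [hphiS, Finset.sum_union hdisjRNT, hsumNT, ← hSdec, Finset.sum_union hdisjRX,
      hX_def, Finset.sum_union hdisjaT, Finset.sum_singleton]
    simp only [id_eq]
    omega
  -- membership bounds of phi S
  have hmemphi : ∀ x ∈ phi S, (a + 1 ≤ x ∧ x ≤ M - a) ∨ (M - a + 2 ≤ x ∧ x ≤ M + 1) := by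
    intro x hx
    rw [hphiS, Finset.mem_union] at hx
    rcases hx with hx | hx
    · exact Or.inl (hRb x hx)
    · rw [hNT_def, Finset.mem_Icc] at hx; exact Or.inr hx
  have hpos' : ∀ x ∈ phi S, 1 ≤ x := by
    intro x hx; rcases hmemphi x hx with h | h <;> omega
  have hM1mem : M + 1 ∈ phi S := by
    rw [hphiS, Finset.mem_union, hNT_def]
    exact Or.inr (by rw [Finset.mem_Icc]; omega)
  have hne' : (phi S).Nonempty := ⟨M + 1, hM1mem⟩
  have hmx' : mx (phi S) = M + 1 := by
    refine mx_eq hM1mem ?_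
    intro x hx; rcases hmemphi x hx with h | h <;> omega
  have hmn' : a + 1 ≤ mn (phi S) := by
    rcases hmemphi _ (mn_mem hne') with h | h <;> omega
  have hnotmem : M - a + 1 ∉ phi S := by
    intro hx; rcases hmemphi _ hx with h | h <;> omega
  have hstair' : stair (phi S) = a := by
    refine le_antisymm ?_ ?_
    · refine stair_le_of ?_
      rw [hmx']
      have h6 : M + 1 - a = M - a + 1 := by omega
      rw [h6]; exact hnotmem
    · refine le_stair (by rw [hmx']; omega) ?_
      rw [hmx']
      have h6 : M + 1 + 1 - a = M - a + 2 := by omega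
      rw [h6]
      rw [hphiS]
      exact Finset.subset_union_right
  have hgood' : IsGood (phi S) := by
    right
    constructor
    · omega
    · rw [hstair', hmx']; omega
  have hinv : phi (phi S) = S := by
    rw [phi, if_neg (by omega), hstair', hmx']
    have e1 : Finset.Icc (M + 1 - a + 1) (M + 1) = NT := by
      rw [hNT_def, show M + 1 - a + 1 = M - a + 2 by omega]
    have e2 : Finset.Icc (M + 1 - a) (M + 1 - 1) = Finset.Icc (M - a + 1) M := by
      congr 1 <;> omega
    rw [e1, e2, hphiS, Finset.union_sdiff_cancel_right hdisjRNT]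
    rw [← hSdec, hX_def]
  exact ⟨hsum, hcard, hpos', hgood', hinv⟩

lemma caseB (S : Finset ℕ) (hne : S.Nonempty) (hpos : ∀ x ∈ S, 1 ≤ x)
    (h1 : stair S < mn S) (h2 : 2 * stair S < mx S) :
    (phi S).sum id = S.sum id ∧ (phi S).card = S.card + 1 ∧ (∀ x ∈ phi S, 1 ≤ x) ∧
      IsGood (phi S) ∧ phi (phi S) = S := by
  set a := mn S with ha_def
  set M := mx S with hM_def
  set t := stair S with ht_def
  have ha : a ∈ S := mn_mem hne
  have hM : M ∈ S := mx_mem hne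
  have h1a : 1 ≤ a := hpos _ ha
  have haM : a ≤ M := le_mx ha
  have htM : t ≤ M := stair_le
  have ht1 : 1 ≤ t := one_le_stair hne (by omega)
  set T : Finset ℕ := Finset.Icc (M - t + 1) M with hT_def
  set R : Finset ℕ := S \ T with hR_def
  set NB : Finset ℕ := {t} ∪ Finset.Icc (M - t) (M - 1) with hNB_def
  have hTsub : T ⊆ S := by
    have e : M + 1 - t = M - t + 1 := by omega
    have := stair_subset (S := S)
    rw [← hM_def, ← ht_def, e] at this
    exact this
  have hMt : M - t ∉ S := by
    have := mx_sub_stair_not_mem (S := S) hpos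
    rwa [← hM_def, ← ht_def] at this
  have hphiS : phi S = R ∪ NB := by
    rw [phi, if_neg (by omega)]
  have hRb : ∀ x ∈ R, a ≤ x ∧ x ≤ M - t - 1 := by
    intro x hx
    rw [hR_def, Finset.mem_sdiff, hT_def, Finset.mem_Icc] at hx
    have h3 := mn_le hx.1
    have h4 := le_mx hx.1
    rw [← ha_def] at h3
    rw [← hM_def] at h4
    have h5 : x ≠ M - t := fun h => hMt (h ▸ hx.1)
    omega
  have hdisjRNB : Disjoint R NB := by
    rw [Finset.disjoint_left]
    intro x hx hx'
    have := hRb x hx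
    rw [hNB_def, Finset.mem_union, Finset.mem_singleton, Finset.mem_Icc] at hx'
    omega
  have hdisjtI : Disjoint ({t} : Finset ℕ) (Finset.Icc (M - t) (M - 1)) := by
    rw [Finset.disjoint_left]
    intro x hx hx'
    rw [Finset.mem_singleton] at hx
    rw [Finset.mem_Icc] at hx'
    omega
  have hSdec : R ∪ T = S := Finset.sdiff_union_of_subset hTsub
  have hdisjRT : Disjoint R T := Finset.sdiff_disjoint
  have hcardT : T.card = t := by rw [hT_def, Nat.card_Icc]; omega
  have hcardNB : NB.card = 1 + t := by
    rw [hNB_def, Finset.card_union_of_disjoint hdisjtI, Finset.card_singleton, Nat.card_Icc]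
    omega
  have hsumT : T.sum id = (Finset.Icc (M - t) (M - 1)).sum id + t := by
    have h5 : T = Finset.Icc ((M - t) + 1) ((M - 1) + 1) := by
      rw [hT_def]; congr 1; omega
    have := sum_Icc_shift (M - t) (M - 1)
    simp only [id_eq] at this ⊢
    rw [h5, this]
    omega
  have hcard : (phi S).card = S.card + 1 := by
    rw [hphiS, Finset.card_union_of_disjoint hdisjRNB, hcardNB, ← hSdec,
      Finset.card_union_of_disjoint hdisjRT, hcardT]
    omega
  have hsum : (phi S).sum id = S.sum id := by
    rw [hphiS, Finset.sum_union hdisjRNB, ← hSdec, Finset.sum_union hdisjRT, hsumT,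
      hNB_def, Finset.sum_union hdisjtI, Finset.sum_singleton]
    simp only [id_eq]
    omega
  have hmemphi : ∀ x ∈ phi S, (a ≤ x ∧ x ≤ M - t - 1) ∨ x = t ∨ (M - t ≤ x ∧ x ≤ M - 1) := by
    intro x hx
    rw [hphiS, Finset.mem_union, hNB_def, Finset.mem_union, Finset.mem_singleton,
      Finset.mem_Icc] at hx
    rcases hx with hx | hx
    · exact Or.inl (hRb x hx)
    · exact Or.inr hx
  have hpos' : ∀ x ∈ phi S, 1 ≤ x := by
    intro x hx; rcases hmemphi x hx with h | h | h <;> omega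
  have htmem : t ∈ phi S := by
    rw [hphiS, Finset.mem_union, hNB_def, Finset.mem_union, Finset.mem_singleton]
    exact Or.inr (Or.inl rfl)
  have hM1mem : M - 1 ∈ phi S := by
    rw [hphiS, Finset.mem_union, hNB_def, Finset.mem_union, Finset.mem_Icc]
    exact Or.inr (Or.inr (by omega))
  have hne' : (phi S).Nonempty := ⟨t, htmem⟩
  have hmn' : mn (phi S) = t := by
    refine mn_eq htmem ?_
    intro x hx; rcases hmemphi x hx with h | h | h <;> omega
  have hmx' : mx (phi S) = M - 1 := by
    refine mx_eq hM1mem ?_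
    intro x hx; rcases hmemphi x hx with h | h | h <;> omega
  have hstair' : t ≤ stair (phi S) := by
    refine le_stair (by rw [hmx']; omega) ?_
    rw [hmx']
    have e : M - 1 + 1 - t = M - t := by omega
    rw [e, hphiS, hNB_def]
    intro x hx
    rw [Finset.mem_union, Finset.mem_union]
    exact Or.inr (Or.inr hx)
  have hgood' : IsGood (phi S) := by
    left
    rw [hmn', hmx']
    omega
  have hinv : phi (phi S) = S := by
    rw [phi, if_pos (by rw [hmn']; exact hstair'), hmn', hmx']
    have e1 : ({t} : Finset ℕ) ∪ Finset.Icc (M - 1 - t + 1) (M - 1) = NB := by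
      rw [hNB_def]; congr 2; omega
    have e2 : Finset.Icc (M - 1 - t + 2) (M - 1 + 1) = T := by
      rw [hT_def, show M - 1 - t + 2 = M - t + 1 by omega, show M - 1 + 1 = M by omega]
    rw [e1, e2, hphiS, Finset.union_sdiff_cancel_right hdisjRNB, hSdec]
  exact ⟨hsum, hcard, hpos', hgood', hinv⟩

lemma phi_spec (S : Finset ℕ) (hne : S.Nonempty) (hpos : ∀ x ∈ S, 1 ≤ x) (hg : IsGood S) :
    (phi S).sum id = S.sum id ∧ ((phi S).card + 1 = S.card ∨ (phi S).card = S.card + 1) ∧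
      (∀ x ∈ phi S, 1 ≤ x) ∧ IsGood (phi S) ∧ phi (phi S) = S := by
  rcases hg with ⟨h1, h2⟩ | ⟨h1, h2⟩
  · obtain ⟨a, b, c, d, e⟩ := caseA S hne hpos h1 h2
    exact ⟨a, Or.inl b, c, d, e⟩
  · obtain ⟨a, b, c, d, e⟩ := caseB S hne hpos h1 h2
    exact ⟨a, Or.inr b, c, d, e⟩

lemma not_good_classify (S : Finset ℕ) (hne : S.Nonempty) (hpos : ∀ x ∈ S, 1 ≤ x)
    (hng : ¬ IsGood S) :
    (S = Finset.Icc (mn S) (2 * mn S - 1) ∧ mx S = 2 * mn S - 1) ∨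
    (S = Finset.Icc (stair S + 1) (2 * stair S) ∧ mx S = 2 * stair S) := by
  set a := mn S with ha_def
  set M := mx S with hM_def
  set t := stair S with ht_def
  have ha : a ∈ S := mn_mem hne
  have hM : M ∈ S := mx_mem hne
  have h1a : 1 ≤ a := hpos _ ha
  have haM : a ≤ M := le_mx ha
  have htM : t ≤ M := stair_le
  have ht1 : 1 ≤ t := one_le_stair hne (by omega)
  rw [IsGood, ← ha_def, ← hM_def, ← ht_def] at hng
  push_neg at hng
  by_cases hat : a ≤ t
  · -- first pentagonal type
    have h2 : M < 2 * a := by omega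
    left
    have htop : Finset.Icc (M - a + 1) M ⊆ S := by
      refine Finset.Subset.trans (Finset.Icc_subset_Icc (by omega) le_rfl) stair_subset
    have hS : S = Finset.Icc a M := by
      apply Finset.Subset.antisymm
      · intro x hx
        rw [Finset.mem_Icc]
        exact ⟨mn_le hx, le_mx hx⟩
      · intro x hx
        rw [Finset.mem_Icc] at hx
        exact htop (by rw [Finset.mem_Icc]; omega)
    have hta : t ≤ M - a + 1 := by
      refine stair_le_of ?_
      intro hmem
      have := mn_le hmem
      rw [← ha_def] at this
      omega
    have hMa : M = 2 * a - 1 := by omega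
    rw [← hMa, hS]
    exact ⟨rfl, rfl⟩
  · -- second pentagonal type
    push_neg at hat
    have h2 : M ≤ 2 * t := hng.2 hat
    have htop : Finset.Icc (M - t + 1) M ⊆ S := by
      have e : M + 1 - t = M - t + 1 := by omega
      have h3 := stair_subset (S := S)
      rw [← hM_def, ← ht_def, e] at h3
      exact h3
    have h4 : a ≤ M - t + 1 := mn_le (htop (by rw [Finset.mem_Icc]; omega))
    have h5 : M = 2 * t := by omega
    have h6 : a = t + 1 := by omega
    right
    have hS : S = Finset.Icc (t + 1) (2 * t) := by
      apply Finset.Subset.antisymm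
      · intro x hx
        rw [Finset.mem_Icc]
        have := mn_le hx
        have := le_mx hx
        omega
      · intro x hx
        rw [Finset.mem_Icc] at hx
        exact htop (by rw [Finset.mem_Icc]; omega)
    exact ⟨hS, by omega⟩

def distParts (n : ℕ) : Finset (Finset ℕ) :=
  (Finset.Icc 1 n).powerset.filter (fun S => S.sum id = n)

lemma mem_distParts {n : ℕ} {S : Finset ℕ} :
    S ∈ distParts n ↔ S ⊆ Finset.Icc 1 n ∧ S.sum id = n := by
  simp [distParts, Finset.mem_filter, Finset.mem_powerset]

lemma pos_of_mem {n : ℕ} {S : Finset ℕ} (h : S ∈ distParts n) : ∀ x ∈ S, 1 ≤ x := by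
  intro x hx
  have := (mem_distParts.mp h).1 hx
  rw [Finset.mem_Icc] at this
  exact this.1

lemma nonempty_of_mem {n : ℕ} (hn : 1 ≤ n) {S : Finset ℕ} (h : S ∈ distParts n) :
    S.Nonempty := by
  rcases Finset.eq_empty_or_nonempty S with rfl | h'
  · have := (mem_distParts.mp h).2
    simp at this
    omega
  · exact h'

noncomputable def D (n : ℕ) : ℤ := ∑ S ∈ distParts n, (-1 : ℤ) ^ S.card

lemma sum_Icc_id_mul_two (b c : ℕ) (hbc : b ≤ c) :
    (∑ x ∈ Finset.Icc b c, x) * 2 = (b + c) * (c + 1 - b) := by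
  have h1 : Finset.Icc b c = Finset.Ico b (c + 1) := by rw [Finset.Ico_add_one_right_eq_Icc]
  rw [h1, Finset.sum_Ico_eq_sum_range]
  have hm : c + 1 - b = (c - b) + 1 := by omega
  rw [hm]
  set m' := c - b with hm'
  have h2 := Finset.sum_range_id_mul_two (m' + 1)
  rw [Finset.sum_add_distrib, Finset.sum_const, Finset.card_range, smul_eq_mul]
  simp only [Nat.add_sub_cancel] at h2
  have hc : c = b + m' := by omega
  rw [hc]
  nlinarith [h2]


-- first pentagonal family: S₁ k = Icc k (2k-1), sum = k(3k-1)/2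
lemma pent1_spec {k n : ℕ} (hk : 1 ≤ k) (h : 2 * n + k = 3 * k ^ 2) :
    Finset.Icc k (2 * k - 1) ∈ distParts n ∧ ¬ IsGood (Finset.Icc k (2 * k - 1)) ∧
      (Finset.Icc k (2 * k - 1)).card = k := by
  set S : Finset ℕ := Finset.Icc k (2 * k - 1) with hS_def
  have hkk : k ≤ k * k := Nat.le_mul_of_pos_left k hk
  have hsq : k ^ 2 = k * k := sq k
  have hsum : S.sum id = n := by
    have hthis := sum_Icc_id_mul_two k (2 * k - 1) (by omega)
    have e1 : k + (2 * k - 1) = 3 * k - 1 := by omega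
    have e2 : (2 * k - 1) + 1 - k = k := by omega
    rw [e1, e2, Nat.sub_mul, one_mul] at hthis
    have e4 : 3 * k * k = 3 * (k * k) := by ring
    rw [e4, ← hS_def] at hthis
    rw [hsq] at h
    have hid : S.sum id = ∑ x ∈ S, x := rfl
    rw [hid]
    omega
  have hpos : ∀ x ∈ S, 1 ≤ x := by
    intro x hx
    rw [hS_def, Finset.mem_Icc] at hx
    omega
  have hne : S.Nonempty := ⟨k, by rw [hS_def, Finset.mem_Icc]; omega⟩
  have hmn : mn S = k := by
    refine mn_eq (by rw [hS_def, Finset.mem_Icc]; omega) ?_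
    intro x hx
    rw [hS_def, Finset.mem_Icc] at hx
    omega
  have hmx : mx S = 2 * k - 1 := by
    refine mx_eq (by rw [hS_def, Finset.mem_Icc]; omega) ?_
    intro x hx
    rw [hS_def, Finset.mem_Icc] at hx
    omega
  have hst : k ≤ stair S := by
    refine le_stair (by rw [hmx]; omega) ?_
    rw [hmx]
    intro x hx
    rw [Finset.mem_Icc] at hx
    rw [hS_def, Finset.mem_Icc]
    omega
  refine ⟨mem_distParts.mpr ⟨subset_Icc_one hpos hsum, hsum⟩, ?_, by rw [hS_def, Nat.card_Icc]; omega⟩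
  rw [IsGood, hmn, hmx]
  rintro (⟨h1, h2⟩ | ⟨h1, h2⟩) <;> omega

-- second pentagonal family: S₂ k = Icc (k+1) (2k), sum = k(3k+1)/2
lemma pent2_spec {k n : ℕ} (hk : 1 ≤ k) (h : 2 * n = 3 * k ^ 2 + k) :
    Finset.Icc (k + 1) (2 * k) ∈ distParts n ∧ ¬ IsGood (Finset.Icc (k + 1) (2 * k)) ∧
      (Finset.Icc (k + 1) (2 * k)).card = k := by
  set S : Finset ℕ := Finset.Icc (k + 1) (2 * k) with hS_def
  have hkk : k ≤ k * k := Nat.le_mul_of_pos_left k hk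
  have hsq : k ^ 2 = k * k := sq k
  have hsum : S.sum id = n := by
    have hthis := sum_Icc_id_mul_two (k + 1) (2 * k) (by omega)
    have e1 : (k + 1) + 2 * k = 3 * k + 1 := by omega
    have e2 : 2 * k + 1 - (k + 1) = k := by omega
    rw [e1, e2, Nat.add_mul, one_mul] at hthis
    have e4 : 3 * k * k = 3 * (k * k) := by ring
    rw [e4, ← hS_def] at hthis
    rw [hsq] at h
    have hid : S.sum id = ∑ x ∈ S, x := rfl
    rw [hid]
    omega
  have hpos : ∀ x ∈ S, 1 ≤ x := by
    intro x hx
    rw [hS_def, Finset.mem_Icc] at hx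
    omega
  have hne : S.Nonempty := ⟨k + 1, by rw [hS_def, Finset.mem_Icc]; omega⟩
  have hmn : mn S = k + 1 := by
    refine mn_eq (by rw [hS_def, Finset.mem_Icc]; omega) ?_
    intro x hx
    rw [hS_def, Finset.mem_Icc] at hx
    omega
  have hmx : mx S = 2 * k := by
    refine mx_eq (by rw [hS_def, Finset.mem_Icc]; omega) ?_
    intro x hx
    rw [hS_def, Finset.mem_Icc] at hx
    omega
  have hst1 : k ≤ stair S := by
    refine le_stair (by rw [hmx]; omega) ?_
    rw [hmx]
    intro x hx
    rw [Finset.mem_Icc] at hx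
    rw [hS_def, Finset.mem_Icc]
    omega
  have hst2 : stair S ≤ k := by
    refine stair_le_of ?_
    rw [hmx]
    have e : 2 * k - k = k := by omega
    rw [e, hS_def, Finset.mem_Icc]
    omega
  refine ⟨mem_distParts.mpr ⟨subset_Icc_one hpos hsum, hsum⟩, ?_, by rw [hS_def, Nat.card_Icc]; omega⟩
  rw [IsGood, hmn, hmx]
  rintro (⟨h1, h2⟩ | ⟨h1, h2⟩) <;> omega

lemma inj_minus {n k l : ℕ} (h : 2 * n + k = 3 * k ^ 2) (h' : 2 * n + l = 3 * l ^ 2) :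
    k = l := by
  have hz : 2 * (n : ℤ) + k = 3 * (k : ℤ) ^ 2 := by exact_mod_cast h
  have hz' : 2 * (n : ℤ) + l = 3 * (l : ℤ) ^ 2 := by exact_mod_cast h'
  have key : ((k : ℤ) - l) * (3 * ((k : ℤ) + l) - 1) = 0 := by linear_combination hz' - hz
  rcases mul_eq_zero.mp key with h0 | h0 <;> omega

lemma inj_plus {n k l : ℕ} (h : 2 * n = 3 * k ^ 2 + k) (h' : 2 * n = 3 * l ^ 2 + l) :
    k = l := by
  have hz : 2 * (n : ℤ) = 3 * (k : ℤ) ^ 2 + k := by exact_mod_cast h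
  have hz' : 2 * (n : ℤ) = 3 * (l : ℤ) ^ 2 + l := by exact_mod_cast h'
  have key : ((k : ℤ) - l) * (3 * ((k : ℤ) + l) + 1) = 0 := by linear_combination hz' - hz
  rcases mul_eq_zero.mp key with h0 | h0 <;> omega

lemma cross {n k l : ℕ} (hk : 1 ≤ k) (hl : 1 ≤ l) (h : 2 * n + k = 3 * k ^ 2)
    (h' : 2 * n = 3 * l ^ 2 + l) : False := by
  have hz : 2 * (n : ℤ) + k = 3 * (k : ℤ) ^ 2 := by exact_mod_cast h
  have hz' : 2 * (n : ℤ) = 3 * (l : ℤ) ^ 2 + l := by exact_mod_cast h'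
  have key : ((k : ℤ) + l) * (3 * ((k : ℤ) - l) - 1) = 0 := by linear_combination hz' - hz
  rcases mul_eq_zero.mp key with h0 | h0 <;> omega

lemma pentCoeff_nat (n : ℕ) : pentCoeff (n : ℤ) =
    ∑ k ∈ Finset.range (n + 1),
      ((if 2 * (n : ℤ) = (k : ℤ) * (3 * k + 1) then (-1 : ℤ) ^ k else 0) +
        (if 2 * (n : ℤ) = (k : ℤ) * (3 * k - 1) ∧ 1 ≤ k then (-1 : ℤ) ^ k else 0)) := by
  rw [pentCoeff, Int.toNat_natCast]

lemma condA_iff {n j : ℕ} : 2 * (n : ℤ) = (j : ℤ) * (3 * j + 1) ↔ 2 * n = 3 * j ^ 2 + j := by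
  constructor
  · intro h
    have : (2 * n : ℤ) = ((3 * j ^ 2 + j : ℕ) : ℤ) := by push_cast; linear_combination h
    exact_mod_cast this
  · intro h
    have : (2 * n : ℤ) = ((3 * j ^ 2 + j : ℕ) : ℤ) := by exact_mod_cast h
    push_cast at this
    linear_combination this

lemma condB_iff {n j : ℕ} (hj : 1 ≤ j) :
    2 * (n : ℤ) = (j : ℤ) * (3 * j - 1) ↔ 2 * n + j = 3 * j ^ 2 := by
  constructor
  · intro h
    have : (2 * n + j : ℤ) = ((3 * j ^ 2 : ℕ) : ℤ) := by push_cast; linear_combination h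
    exact_mod_cast this
  · intro h
    have : (2 * n + j : ℤ) = ((3 * j ^ 2 : ℕ) : ℤ) := by exact_mod_cast h
    push_cast at this
    linear_combination this

lemma pentCoeff_minus {n k : ℕ} (hn : 1 ≤ n) (hk : 1 ≤ k) (h : 2 * n + k = 3 * k ^ 2) :
    pentCoeff (n : ℤ) = (-1) ^ k := by
  rw [pentCoeff_nat, Finset.sum_add_distrib]
  have hA : ∀ j ∈ Finset.range (n + 1),
      (if 2 * (n : ℤ) = (j : ℤ) * (3 * j + 1) then (-1 : ℤ) ^ j else 0) = 0 := by
    intro j _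
    rw [if_neg]
    intro hc
    rw [condA_iff] at hc
    rcases Nat.eq_zero_or_pos j with rfl | hj
    · simp at hc; omega
    · exact cross hk hj h hc
  rw [Finset.sum_congr rfl hA, Finset.sum_const_zero, zero_add]
  have hkk : k ≤ k * k := Nat.le_mul_of_pos_left k hk
  have hsq : k ^ 2 = k * k := sq k
  have hkr : k ∈ Finset.range (n + 1) := by
    rw [Finset.mem_range]; omega
  rw [Finset.sum_eq_single k]
  · rw [if_pos ⟨(condB_iff hk).mpr h, hk⟩]
  · intro j _ hjk
    rw [if_neg]
    rintro ⟨hc, hj⟩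
    rw [condB_iff hj] at hc
    exact hjk (inj_minus hc h)
  · intro hc
    exact absurd hkr hc

lemma pentCoeff_plus {n k : ℕ} (hn : 1 ≤ n) (hk : 1 ≤ k) (h : 2 * n = 3 * k ^ 2 + k) :
    pentCoeff (n : ℤ) = (-1) ^ k := by
  rw [pentCoeff_nat, Finset.sum_add_distrib]
  have hB : ∀ j ∈ Finset.range (n + 1),
      (if 2 * (n : ℤ) = (j : ℤ) * (3 * j - 1) ∧ 1 ≤ j then (-1 : ℤ) ^ j else 0) = 0 := by
    intro j _
    rw [if_neg]
    rintro ⟨hc, hj⟩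
    rw [condB_iff hj] at hc
    exact cross hj hk hc h
  rw [Finset.sum_congr rfl hB, Finset.sum_const_zero, add_zero]
  have hkk : k ≤ k * k := Nat.le_mul_of_pos_left k hk
  have hsq : k ^ 2 = k * k := sq k
  have hkr : k ∈ Finset.range (n + 1) := by
    rw [Finset.mem_range]; omega
  rw [Finset.sum_eq_single k]
  · rw [if_pos (condA_iff.mpr h)]
  · intro j _ hjk
    rw [if_neg]
    intro hc
    rw [condA_iff] at hc
    exact hjk (inj_plus hc h)
  · intro hc
    exact absurd hkr hc

lemma pentCoeff_none {n : ℕ} (hn : 1 ≤ n)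
    (h1 : ¬ ∃ k, 1 ≤ k ∧ 2 * n + k = 3 * k ^ 2)
    (h2 : ¬ ∃ k, 1 ≤ k ∧ 2 * n = 3 * k ^ 2 + k) :
    pentCoeff (n : ℤ) = 0 := by
  rw [pentCoeff_nat]
  refine Finset.sum_eq_zero ?_
  intro j _
  rw [if_neg, if_neg, add_zero]
  · rintro ⟨hc, hj⟩
    rw [condB_iff hj] at hc
    exact h1 ⟨j, hj, hc⟩
  · intro hc
    rw [condA_iff] at hc
    rcases Nat.eq_zero_or_pos j with rfl | hj
    · simp at hc; omega
    · exact h2 ⟨j, hj, hc⟩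

lemma not_good_classify' {n : ℕ} {S : Finset ℕ} (hn : 1 ≤ n) (hS : S ∈ distParts n)
    (hng : ¬ IsGood S) :
    (∃ k, 1 ≤ k ∧ 2 * n + k = 3 * k ^ 2 ∧ S = Finset.Icc k (2 * k - 1)) ∨
    (∃ k, 1 ≤ k ∧ 2 * n = 3 * k ^ 2 + k ∧ S = Finset.Icc (k + 1) (2 * k)) := by
  have hne := nonempty_of_mem hn hS
  have hpos := pos_of_mem hS
  have hsum := (mem_distParts.mp hS).2
  rcases not_good_classify S hne hpos hng with ⟨hSe, _⟩ | ⟨hSe, _⟩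
  · left
    set a := mn S with ha_def
    have h1a : 1 ≤ a := hpos _ (mn_mem hne)
    refine ⟨a, h1a, ?_, hSe⟩
    rw [hSe] at hsum
    have hkk : a ≤ a * a := Nat.le_mul_of_pos_left a h1a
    have hsq : a ^ 2 = a * a := sq a
    have hthis := sum_Icc_id_mul_two a (2 * a - 1) (by omega)
    have e1 : a + (2 * a - 1) = 3 * a - 1 := by omega
    have e2 : (2 * a - 1) + 1 - a = a := by omega
    rw [e1, e2, Nat.sub_mul, one_mul] at hthis
    have e4 : 3 * a * a = 3 * (a * a) := by ring
    rw [e4] at hthis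
    have hid : (Finset.Icc a (2 * a - 1)).sum id = ∑ x ∈ Finset.Icc a (2 * a - 1), x := rfl
    rw [hid] at hsum
    omega
  · right
    set t := stair S with ht_def
    have h1a : 1 ≤ mn S := hpos _ (mn_mem hne)
    have ht1 : 1 ≤ t := one_le_stair hne (le_trans h1a (le_mx (mn_mem hne)))
    refine ⟨t, ht1, ?_, hSe⟩
    rw [hSe] at hsum
    have hkk : t ≤ t * t := Nat.le_mul_of_pos_left t ht1
    have hsq : t ^ 2 = t * t := sq t
    have hthis := sum_Icc_id_mul_two (t + 1) (2 * t) (by omega)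
    have e1 : (t + 1) + 2 * t = 3 * t + 1 := by omega
    have e2 : 2 * t + 1 - (t + 1) = t := by omega
    rw [e1, e2, Nat.add_mul, one_mul] at hthis
    have e4 : 3 * t * t = 3 * (t * t) := by ring
    rw [e4] at hthis
    have hid : (Finset.Icc (t + 1) (2 * t)).sum id = ∑ x ∈ Finset.Icc (t + 1) (2 * t), x := rfl
    rw [hid] at hsum
    omega

theorem euler {n : ℕ} (hn : 1 ≤ n) : D n = pentCoeff (n : ℤ) := by
  classical
  have hsplit :
      D n = (∑ S ∈ (distParts n).filter (fun S => IsGood S), (-1 : ℤ) ^ S.card)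
        + ∑ S ∈ (distParts n).filter (fun S => ¬ IsGood S), (-1 : ℤ) ^ S.card :=
    (Finset.sum_filter_add_sum_filter_not _ _ _).symm
  have hgood : ∑ S ∈ (distParts n).filter (fun S => IsGood S), (-1 : ℤ) ^ S.card = 0 := by
    refine Finset.sum_involution (fun S _ => phi S) ?_ ?_ ?_ ?_
    · intro S hS
      rw [Finset.mem_filter] at hS
      obtain ⟨_, hcard, _, _, _⟩ :=
        phi_spec S (nonempty_of_mem hn hS.1) (pos_of_mem hS.1) hS.2
      rcases hcard with h | h
      · rw [← h, pow_succ]; ring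
      · rw [h, pow_succ]; ring
    · intro S hS _
      rw [Finset.mem_filter] at hS
      obtain ⟨_, hcard, _, _, _⟩ :=
        phi_spec S (nonempty_of_mem hn hS.1) (pos_of_mem hS.1) hS.2
      intro heq
      have heq' : phi S = S := heq
      rw [heq'] at hcard
      omega
    · intro S hS
      rw [Finset.mem_filter] at hS
      obtain ⟨hsum', _, hpos', hgood', _⟩ :=
        phi_spec S (nonempty_of_mem hn hS.1) (pos_of_mem hS.1) hS.2
      rw [Finset.mem_filter]
      have hsum'' : (phi S).sum id = n := by rw [hsum', (mem_distParts.mp hS.1).2]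
      exact ⟨mem_distParts.mpr ⟨subset_Icc_one hpos' hsum'', hsum''⟩, hgood'⟩
    · intro S hS
      rw [Finset.mem_filter] at hS
      obtain ⟨_, _, _, _, hinv⟩ :=
        phi_spec S (nonempty_of_mem hn hS.1) (pos_of_mem hS.1) hS.2
      exact hinv
  have hbad : ∑ S ∈ (distParts n).filter (fun S => ¬ IsGood S), (-1 : ℤ) ^ S.card
      = pentCoeff (n : ℤ) := by
    by_cases hp1 : ∃ k, 1 ≤ k ∧ 2 * n + k = 3 * k ^ 2
    · obtain ⟨k, hk1, hk⟩ := hp1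
      have hE : (distParts n).filter (fun S => ¬ IsGood S) = {Finset.Icc k (2 * k - 1)} := by
        apply Finset.Subset.antisymm
        · intro S hS
          rw [Finset.mem_filter] at hS
          rcases not_good_classify' hn hS.1 hS.2 with ⟨l, hl1, hl, hSe⟩ | ⟨l, hl1, hl, hSe⟩
          · rw [Finset.mem_singleton, hSe, inj_minus hl hk]
          · exact absurd hl (fun hl => cross hk1 hl1 hk hl)
        · rw [Finset.singleton_subset_iff, Finset.mem_filter]
          exact ⟨(pent1_spec hk1 hk).1, (pent1_spec hk1 hk).2.1⟩
      rw [hE, Finset.sum_singleton, (pent1_spec hk1 hk).2.2, pentCoeff_minus hn hk1 hk]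
    · by_cases hp2 : ∃ k, 1 ≤ k ∧ 2 * n = 3 * k ^ 2 + k
      · obtain ⟨k, hk1, hk⟩ := hp2
        have hE : (distParts n).filter (fun S => ¬ IsGood S) = {Finset.Icc (k + 1) (2 * k)} := by
          apply Finset.Subset.antisymm
          · intro S hS
            rw [Finset.mem_filter] at hS
            rcases not_good_classify' hn hS.1 hS.2 with ⟨l, hl1, hl, hSe⟩ | ⟨l, hl1, hl, hSe⟩
            · exact absurd hl (fun hl => cross hl1 hk1 hl hk)
            · rw [Finset.mem_singleton, hSe, inj_plus hl hk]
          · rw [Finset.singleton_subset_iff, Finset.mem_filter]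
            exact ⟨(pent2_spec hk1 hk).1, (pent2_spec hk1 hk).2.1⟩
        rw [hE, Finset.sum_singleton, (pent2_spec hk1 hk).2.2, pentCoeff_plus hn hk1 hk]
      · have hE : (distParts n).filter (fun S => ¬ IsGood S) = ∅ := by
          rw [Finset.eq_empty_iff_forall_notMem]
          intro S hS
          rw [Finset.mem_filter] at hS
          rcases not_good_classify' hn hS.1 hS.2 with ⟨l, hl1, hl, _⟩ | ⟨l, hl1, hl, _⟩
          · exact hp1 ⟨l, hl1, hl⟩
          · exact hp2 ⟨l, hl1, hl⟩
        rw [hE, Finset.sum_empty, pentCoeff_none hn hp1 hp2]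
  rw [hsplit, hgood, hbad, zero_add]

noncomputable def Dnot (m i : ℕ) : ℤ :=
  ∑ S ∈ (distParts m).filter (fun S => i ∉ S), (-1 : ℤ) ^ S.card

lemma distParts_zero : distParts 0 = {∅} := by
  ext S
  simp only [mem_distParts, Finset.mem_singleton]
  constructor
  · rintro ⟨h1, _⟩
    have : Finset.Icc 1 0 = ∅ := Finset.Icc_eq_empty (by omega)
    rw [this, Finset.subset_empty] at h1
    exact h1
  · rintro rfl
    simp

lemma pentCoeff_zero : pentCoeff 0 = 1 := by
  rw [pentCoeff]
  norm_num

lemma Dnot_zero {i : ℕ} : Dnot 0 i = 1 := by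
  rw [Dnot, distParts_zero]
  rw [Finset.filter_singleton, if_pos (Finset.notMem_empty i)]
  simp

lemma Dnot_small {m i : ℕ} (h : m < i) : Dnot m i = D m := by
  rw [Dnot, D, Finset.filter_true_of_mem]
  intro S hS hi
  have := (mem_distParts.mp hS).1 hi
  rw [Finset.mem_Icc] at this
  omega

lemma key_bij {m i : ℕ} (hi : 1 ≤ i) (him : i ≤ m) :
    ∑ S ∈ (distParts m).filter (fun S => i ∈ S), (-1 : ℤ) ^ S.card = - Dnot (m - i) i := by
  have h : ∑ S ∈ (distParts m).filter (fun S => i ∈ S), (-1 : ℤ) ^ S.card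
      = ∑ T ∈ (distParts (m - i)).filter (fun T => i ∉ T), (-((-1 : ℤ) ^ T.card)) := by
    refine Finset.sum_bij (fun S _ => S.erase i) ?_ ?_ ?_ ?_
    · intro S hS
      rw [Finset.mem_filter] at hS ⊢
      obtain ⟨hmem, hiS⟩ := hS
      obtain ⟨hsub, hsum⟩ := mem_distParts.mp hmem
      have hsum' : (S.erase i).sum id = m - i := by
        have := Finset.add_sum_erase S id hiS
        simp only [id_eq] at this hsum ⊢
        omega
      have hpos : ∀ x ∈ S.erase i, 1 ≤ x := by
        intro x hx
        have := hsub (Finset.erase_subset i S hx)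
        rw [Finset.mem_Icc] at this
        exact this.1
      exact ⟨mem_distParts.mpr ⟨subset_Icc_one hpos hsum', hsum'⟩, Finset.notMem_erase i S⟩
    · intro S hS S' hS' heq
      rw [Finset.mem_filter] at hS hS'
      have heq' : S.erase i = S'.erase i := heq
      rw [← Finset.insert_erase hS.2, ← Finset.insert_erase hS'.2, heq']
    · intro T hT
      rw [Finset.mem_filter] at hT
      obtain ⟨hmem, hiT⟩ := hT
      obtain ⟨hsub, hsum⟩ := mem_distParts.mp hmem
      refine ⟨insert i T, ?_, ?_⟩
      · rw [Finset.mem_filter]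
        have hsum' : (insert i T).sum id = m := by
          rw [Finset.sum_insert hiT]
          simp only [id_eq] at hsum ⊢
          omega
        have hpos : ∀ x ∈ insert i T, 1 ≤ x := by
          intro x hx
          rcases Finset.mem_insert.mp hx with rfl | hx
          · exact hi
          · have := hsub hx
            rw [Finset.mem_Icc] at this
            exact this.1
        exact ⟨mem_distParts.mpr ⟨subset_Icc_one hpos hsum', hsum'⟩, Finset.mem_insert_self i T⟩
      · exact Finset.erase_insert hiT
    · intro S hS
      rw [Finset.mem_filter] at hS
      have h1 : 1 ≤ S.card := Finset.card_pos.mpr ⟨i, hS.2⟩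
      have h2 : S.card = (S.erase i).card + 1 := by
        rw [Finset.card_erase_of_mem hS.2]
        omega
      rw [h2, pow_succ]
      ring
  rw [h, Dnot, ← Finset.sum_neg_distrib]

lemma Dnot_rec {m i : ℕ} (hi : 1 ≤ i) (him : i ≤ m) : Dnot m i = D m + Dnot (m - i) i := by
  classical
  have hsp := Finset.sum_filter_add_sum_filter_not (distParts m) (fun S => i ∉ S)
    (fun S => (-1 : ℤ) ^ S.card)
  have he : (distParts m).filter (fun S => ¬ i ∉ S) = (distParts m).filter (fun S => i ∈ S) := by
    apply Finset.filter_congr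
    intro S _
    simp
  rw [he, key_bij hi him] at hsp
  simp only [Dnot, D] at hsp ⊢
  linarith [hsp]

lemma Dnot_formula {i : ℕ} (hi : 1 ≤ i) :
    ∀ m, Dnot m i = ∑ s ∈ Finset.range (m / i + 1), pentCoeff ((m : ℤ) - s * i) := by
  intro m
  induction m using Nat.strong_induction_on with
  | _ m ih =>
    rcases Nat.eq_zero_or_pos m with rfl | hm
    · rw [Dnot_zero, Nat.zero_div, Finset.range_one, Finset.sum_singleton]
      norm_num [pentCoeff_zero]
    · by_cases him : i ≤ m
      · have hrec := Dnot_rec hi him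
        have hih := ih (m - i) (by omega)
        have hdiv : m / i = (m - i) / i + 1 := by
          have e : m = (m - i) + i := by omega
          conv_lhs => rw [e]
          rw [Nat.add_div_right _ (by omega)]
        rw [hrec, hih, euler (by omega), hdiv]
        have hs : ∀ s ∈ Finset.range ((m - i) / i + 1),
            pentCoeff (((m - i : ℕ) : ℤ) - (s : ℕ) * i)
              = pentCoeff ((m : ℤ) - ((s + 1 : ℕ) : ℤ) * i) := by
          intro s _
          congr 1
          push_cast [Nat.cast_sub him]
          ring
        conv_rhs => rw [Finset.sum_range_succ'
          (fun s => pentCoeff ((m : ℤ) - (s : ℕ) * i)) ((m - i) / i + 1)]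
        rw [add_comm]
        congr 1
        · exact Finset.sum_congr rfl hs
        · norm_num
      · push_neg at him
        rw [Dnot_small him, euler hm, Nat.div_eq_of_lt him, Finset.range_one,
          Finset.sum_singleton]
        norm_num

end Pent7

open Pent7

theorem statement7 (n i : ℕ) (hn : 1 ≤ n) (hi1 : 1 ≤ i) (hin : i ≤ n) :
    aEnt n i = (sOdd n i : ℤ) - (sEven n i : ℤ) := by
  classical
  set A := (distParts n).filter (fun S => i ∈ S) with hA
  have hOddset : A.filter (fun S => Odd S.card) =
      (Finset.Icc 1 n).powerset.filter (fun S => S.sum id = n ∧ i ∈ S ∧ Odd S.card) := by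
    rw [hA, distParts, Finset.filter_filter, Finset.filter_filter]
    all_goals (apply Finset.filter_congr; intro S _; tauto)
  have hEvenset : A.filter (fun S => ¬ Odd S.card) =
      (Finset.Icc 1 n).powerset.filter (fun S => S.sum id = n ∧ i ∈ S ∧ Even S.card) := by
    rw [hA, distParts, Finset.filter_filter, Finset.filter_filter]
    all_goals (apply Finset.filter_congr; intro S _; simp [Nat.not_odd_iff_even])
  have h1 : ∑ S ∈ A.filter (fun S => Odd S.card), (-1 : ℤ) ^ S.card
      = -(sOdd n i : ℤ) := by
    have hterm : ∀ S ∈ A.filter (fun S => Odd S.card), (-1 : ℤ) ^ S.card = -1 := by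
      intro S hS
      exact Odd.neg_one_pow (Finset.mem_filter.mp hS).2
    rw [Finset.sum_congr rfl hterm, Finset.sum_const, hOddset, sOdd]
    simp
  have h2 : ∑ S ∈ A.filter (fun S => ¬ Odd S.card), (-1 : ℤ) ^ S.card
      = (sEven n i : ℤ) := by
    have hterm : ∀ S ∈ A.filter (fun S => ¬ Odd S.card), (-1 : ℤ) ^ S.card = 1 := by
      intro S hS
      exact Even.neg_one_pow (Nat.not_odd_iff_even.mp (Finset.mem_filter.mp hS).2)
    rw [Finset.sum_congr rfl hterm, Finset.sum_const, hEvenset, sEven]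
    simp
  have hsumA : ∑ S ∈ A, (-1 : ℤ) ^ S.card = (sEven n i : ℤ) - (sOdd n i : ℤ) := by
    rw [← Finset.sum_filter_add_sum_filter_not A (fun S => Odd S.card), h1, h2]
    ring
  have hkey := key_bij hi1 hin
  rw [← hA] at hkey
  have hSD : (sOdd n i : ℤ) - (sEven n i : ℤ) = Dnot (n - i) i := by
    rw [hsumA] at hkey
    linarith
  have hformula := Dnot_formula hi1 (n - i)
  have hdiv : (n - i) / i + 1 = n / i := by
    have e : n = (n - i) + i := by omega
    conv_rhs => rw [e]
    rw [Nat.add_div_right _ (by omega)]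
  rw [hSD, hformula, hdiv, aEnt]
  apply Finset.sum_congr rfl
  intro s _
  congr 1
  push_cast [Nat.cast_sub hin]
  ring
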